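/- Let C be a modular category that is a Z_q-extension of a pointed fusion category (q prime) and is not pointed. Then every component of the universal grading of C has FP dimension q, every non-invertible simple object of C has FP dimension √q, and C is not integral. -/

import Mathlib

/-!
A Grothendieck-ring (fusion ring) level formalization of fusion categories.
`Fin n` indexes the isomorphism classes of simple objects, `N i j k` is the
multiplicity of the simple `k` in the tensor product `i ⊗ j`, `dim` records the
Frobenius–Perron dimensions of the simple objects.
-/

/-- The Grothendieck-ring data of a fusion category. -/
structure FusionData where
  n : ℕ
  npos : 0 < n
  one : Fin n
  dual : Fin n → Fin n
  N : Fin n → Fin n → Fin n → ℕ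
  dim : Fin n → ℝ
  dim_ge_one : ∀ i, 1 ≤ dim i
  dim_one : dim one = 1
  dim_dual : ∀ i, dim (dual i) = dim i
  dim_mul : ∀ i j, dim i * dim j = ∑ k, (N i j k : ℝ) * dim k
  N_one_left : ∀ i k, N one i k = if k = i then 1 else 0
  N_one_right : ∀ i k, N i one k = if k = i then 1 else 0
  N_dual : ∀ i j, N i j one = if j = dual i then 1 else 0
  dual_dual : ∀ i, dual (dual i) = i
  N_assoc : ∀ i j k l, ∑ m, N i j m * N m k l = ∑ m, N j k m * N i m l

namespace FusionData

/-- The index type of (iso classes of) simple objects. -/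
abbrev I (C : FusionData) : Type := Fin C.n

/-- A simple object is invertible iff its FP dimension is `1`. -/
def Invertible (C : FusionData) (i : C.I) : Prop := C.dim i = 1

/-- A fusion category is pointed if all its simple objects are invertible. -/
def Pointed (C : FusionData) : Prop := ∀ i : C.I, C.dim i = 1

/-- The Frobenius–Perron dimension of the category. -/
noncomputable def FPdim (C : FusionData) : ℝ := ∑ i : C.I, C.dim i ^ 2

open Classical in
/-- The FP dimension of the full subcategory spanned by a set of simples. -/
noncomputable def FPdimSet (C : FusionData) (S : Set C.I) : ℝ :=
  ∑ i : C.I, if i ∈ S then C.dim i ^ 2 else 0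

open Classical in
/-- The number of iso classes of invertible objects, i.e. the order of `G(C)`. -/
noncomputable def numInv (C : FusionData) : ℕ :=
  (Finset.univ.filter fun i : C.I => C.dim i = 1).card

/-- A fusion subcategory: a set of simples containing the unit and closed under
duals and under taking simple constituents of tensor products. -/
structure Sub (C : FusionData) where
  carrier : Set C.I
  one_mem : C.one ∈ carrier
  dual_mem : ∀ i ∈ carrier, C.dual i ∈ carrier
  mul_mem : ∀ i ∈ carrier, ∀ j ∈ carrier, ∀ k, 0 < C.N i j k → k ∈ carrier

/-- The simples of the fusion subcategory generated by a set `S` of simples. -/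
inductive gen (C : FusionData) (S : Set C.I) : C.I → Prop
  | base {i} : i ∈ S → gen C S i
  | one : gen C S C.one
  | dual {i} : gen C S i → gen C S (C.dual i)
  | mul {i j k} : gen C S i → gen C S j → 0 < C.N i j k → gen C S k

/-- Simple constituents of the objects `X ⊗ X⋆`, `X` simple. -/
def adjointGenerators (C : FusionData) : Set C.I := {k | ∃ i, 0 < C.N i (C.dual i) k}

/-- The set of simple objects of the adjoint subcategory `C_ad`. -/
def adSet (C : FusionData) : Set C.I := {k | C.gen C.adjointGenerators k}

/-- The set of simples of `C_pt`, the largest pointed fusion subcategory. -/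
def ptSet (C : FusionData) : Set C.I := {i | C.dim i = 1}

/-- The ring-level shadow of a braiding: the Grothendieck ring of a braided
fusion category is commutative. -/
def Braided (C : FusionData) : Prop := ∀ i j k, C.N i j k = C.N j i k

/-- Integrality: every simple object has integer FP dimension. -/
def Integral (C : FusionData) : Prop := ∀ i : C.I, ∃ m : ℕ, C.dim i = (m : ℝ)

/-- Generalized Tambara–Yamagami: non-pointed, and the tensor product of any
two non-invertible simples is a direct sum of invertibles. -/
def GeneralizedTY (C : FusionData) : Prop :=
  ¬ C.Pointed ∧ ∀ i j : C.I, C.dim i ≠ 1 → C.dim j ≠ 1 →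
    ∀ k, 0 < C.N i j k → C.dim k = 1

/-- A grading of `C` by a group `G`. -/
structure Grading (C : FusionData) (G : Type*) [Group G] where
  deg : C.I → G
  deg_one : deg C.one = 1
  deg_mul : ∀ i j k, 0 < C.N i j k → deg k = deg i * deg j
  deg_dual : ∀ i, deg (C.dual i) = (deg i)⁻¹

/-- A grading is faithful if every component is nonzero, equivalently the
degree map is surjective. -/
def Grading.Faithful {C : FusionData} {G : Type*} [Group G] (g : C.Grading G) : Prop :=
  Function.Surjective g.deg

/-- A `ℤ_q`-extension of a pointed fusion category: a faithful `ℤ_q`-grading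
whose trivial component is pointed. -/
structure ZqExtension (C : FusionData) (q : ℕ) where
  grading : C.Grading (Multiplicative (ZMod q))
  faithful : Function.Surjective grading.deg
  trivial_pointed : ∀ i, grading.deg i = 1 → C.dim i = 1

/-- `C` is tensor equivalent to the Deligne product `B ⊠ E`. -/
def IsDeligneProd (C B E : FusionData) : Prop :=
  ∃ e : C.I ≃ B.I × E.I,
    e C.one = (B.one, E.one) ∧
    (∀ i, e (C.dual i) = (B.dual (e i).1, E.dual (e i).2)) ∧
    (∀ i j k, C.N i j k = B.N (e i).1 (e j).1 (e k).1 * E.N (e i).2 (e j).2 (e k).2) ∧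
    (∀ i, C.dim i = B.dim (e i).1 * E.dim (e i).2)

/-- `C` is tensor equivalent to the Deligne product of the finite family `F`. -/
def IsDelignePi (C : FusionData) {t : ℕ} (F : Fin t → FusionData) : Prop :=
  ∃ e : C.I ≃ ∀ s, (F s).I,
    (e C.one = fun s => (F s).one) ∧
    (∀ i s, e (C.dual i) s = (F s).dual (e i s)) ∧
    (∀ i j k, C.N i j k = ∏ s, (F s).N (e i s) (e j s) (e k s)) ∧
    (∀ i, C.dim i = ∏ s, (F s).dim (e i s))

/-- A fusion category of type `(1, m; α, n)`: `m` invertible simples, `n`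
simples of FP dimension `α > 1`, and no others. -/
def OfType₂ (C : FusionData) (α : ℝ) (m n : ℕ) : Prop :=
  1 < α ∧ (∀ i : C.I, C.dim i = 1 ∨ C.dim i = α) ∧
    Nat.card {i : C.I // C.dim i = 1} = m ∧ Nat.card {i : C.I // C.dim i = α} = n

/-- An Ising category: three simples `1, g, X` with `g` invertible, `g ≠ 1`,
`FPdim X = √2` and `X ⊗ X ≅ 1 ⊕ g`. -/
def IsIsing (C : FusionData) : Prop :=
  C.n = 3 ∧ ¬ C.Pointed ∧ C.FPdim = 4 ∧
    ∃ g X : C.I, g ≠ C.one ∧ C.dim g = 1 ∧ C.dim X = Real.sqrt 2 ∧ C.dual X = X ∧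
      C.N X X C.one = 1 ∧ C.N X X g = 1 ∧ ∀ k, 0 < C.N X X k → k = C.one ∨ k = g

/-- Modularity at the Grothendieck-ring level: braided together with a
symmetric nondegenerate S-matrix satisfying the Verlinde relations and
normalized by FP dimensions on the row of the unit. -/
def Modular (C : FusionData) : Prop :=
  C.Braided ∧
    ∃ s : Matrix C.I C.I ℂ,
      (∀ i j, s i j = s j i) ∧
      (∀ i, s C.one i = (C.dim i : ℂ)) ∧
      (∀ i j k, s i j * s i k = (C.dim i : ℂ) * ∑ l, (C.N j k l : ℂ) * s i l) ∧
      IsUnit s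

/-- A ring-level Morita context between two fusion categories: a based
`(C, D)`-bimodule with commuting indecomposable actions and equal global
FP dimensions. -/
structure MoritaContext (C D : FusionData) where
  m : ℕ
  actL : C.I → Fin m → Fin m → ℕ
  actR : D.I → Fin m → Fin m → ℕ
  actL_one : ∀ x y, actL C.one x y = if y = x then 1 else 0
  actR_one : ∀ x y, actR D.one x y = if y = x then 1 else 0
  actL_assoc : ∀ i j x z, (∑ k, C.N i j k * actL k x z) = ∑ y, actL j x y * actL i y z
  actR_assoc : ∀ i j x z, (∑ k, D.N i j k * actR k x z) = ∑ y, actR i x y * actR j y z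
  commute : ∀ i j x z, (∑ y, actL i x y * actR j y z) = ∑ y, actR j x y * actL i y z
  indecL : ∀ x y, ∃ i, 0 < actL i x y
  indecR : ∀ x y, ∃ j, 0 < actR j x y
  fpdim_eq : C.FPdim = D.FPdim

/-- (Categorical) Morita equivalence, encoded at the ring level. -/
def MoritaEquiv (C D : FusionData) : Prop := Nonempty (MoritaContext C D)

/-- Group-theoretical: Morita equivalent to a pointed fusion category. -/
def GroupTheoretical (C : FusionData) : Prop :=
  ∃ D : FusionData, D.Pointed ∧ MoritaEquiv C D

end FusionData

namespace FusionData

variable {C : FusionData}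

lemma dim_pos (i : C.I) : 0 < C.dim i := lt_of_lt_of_le one_pos (C.dim_ge_one i)

lemma dim_ne_zero (i : C.I) : C.dim i ≠ 0 := (dim_pos i).ne'

lemma dual_inj : Function.Injective C.dual := fun i j h => by
  rw [← C.dual_dual i, h, C.dual_dual]

/-- Frobenius reciprocity, first form. -/
lemma frob1 (i j k : C.I) : C.N i j k = C.N j (C.dual k) (C.dual i) := by
  have h := C.N_assoc i j (C.dual k) C.one
  have hl : ∑ m, C.N i j m * C.N m (C.dual k) C.one = C.N i j k := by
    rw [Finset.sum_eq_single k]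
    · rw [C.N_dual]; simp
    · intro m _ hm
      rw [C.N_dual]
      have : ¬ (C.dual k = C.dual m) := fun h' => hm ((dual_inj h').symm)
      simp [this]
    · simp
  have hr : ∑ m, C.N j (C.dual k) m * C.N i m C.one = C.N j (C.dual k) (C.dual i) := by
    rw [Finset.sum_eq_single (C.dual i)]
    · rw [C.N_dual]; simp
    · intro m _ hm; rw [C.N_dual]; simp [hm]
    · simp
  rw [hl, hr] at h
  exact h

/-- Frobenius reciprocity, second form. -/
lemma frob2 (i j k : C.I) : C.N i j k = C.N (C.dual k) i (C.dual j) := by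
  rw [frob1, frob1, C.dual_dual]

/-- The duality equivalence. -/
def dualEquiv (C : FusionData) : C.I ≃ C.I := ⟨C.dual, C.dual, C.dual_dual, C.dual_dual⟩

/-- Summing over the middle index against dimensions. -/
lemma sum_N_dim_mid (i k : C.I) :
    ∑ j, (C.N i j k : ℝ) * C.dim j = C.dim i * C.dim k := by
  have h1 : ∀ j : C.I, (C.N i j k : ℝ) * C.dim j
      = (fun j => (C.N (C.dual k) i j : ℝ) * C.dim j) (C.dualEquiv j) := by
    intro j
    simp only [dualEquiv, Equiv.coe_fn_mk]
    rw [← frob2, C.dim_dual]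
  calc ∑ j, (C.N i j k : ℝ) * C.dim j
      = ∑ j, (fun j => (C.N (C.dual k) i j : ℝ) * C.dim j) (C.dualEquiv j) :=
        Finset.sum_congr rfl (fun j _ => h1 j)
    _ = ∑ j, (C.N (C.dual k) i j : ℝ) * C.dim j :=
        Equiv.sum_comp C.dualEquiv (fun j => (C.N (C.dual k) i j : ℝ) * C.dim j)
    _ = C.dim (C.dual k) * C.dim i := (C.dim_mul _ _).symm
    _ = C.dim i * C.dim k := by rw [C.dim_dual]; ring

section Invertible

/-- An invertible object tensored with its dual is the unit. -/
lemma N_self_dual {g : C.I} (hg : C.dim g = 1) (k : C.I) :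
    C.N g (C.dual g) k = if k = C.one then 1 else 0 := by
  have h1 : C.N g (C.dual g) C.one = 1 := by rw [C.N_dual]; simp
  have hsum : ∑ k, (C.N g (C.dual g) k : ℝ) * C.dim k = 1 := by
    rw [← C.dim_mul, hg, C.dim_dual, hg]; norm_num
  by_cases hk : k = C.one
  · simp [hk, h1]
  · simp only [hk, if_false]
    by_contra hN
    have hN1 : 1 ≤ (C.N g (C.dual g) k : ℝ) := by exact_mod_cast Nat.one_le_iff_ne_zero.2 hN
    have hsub : ({C.one, k} : Finset C.I) ⊆ Finset.univ := Finset.subset_univ _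
    have hpair : ∑ l ∈ ({C.one, k} : Finset C.I), (C.N g (C.dual g) l : ℝ) * C.dim l
        ≤ ∑ l, (C.N g (C.dual g) l : ℝ) * C.dim l := by
      apply Finset.sum_le_sum_of_subset_of_nonneg hsub
      intro l _ _
      exact mul_nonneg (Nat.cast_nonneg _) (le_of_lt (dim_pos l))
    rw [Finset.sum_pair (fun h => hk h.symm)] at hpair
    rw [hsum, h1, C.dim_one] at hpair
    have hmul : (1:ℝ) * 1 ≤ (C.N g (C.dual g) k : ℝ) * C.dim k :=
      mul_le_mul hN1 (C.dim_ge_one k) zero_le_one (le_trans zero_le_one hN1)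
    push_cast at hpair
    linarith

lemma N_dual_self {g : C.I} (hg : C.dim g = 1) (k : C.I) :
    C.N (C.dual g) g k = if k = C.one then 1 else 0 := by
  have := N_self_dual (C := C) (g := C.dual g) (by rw [C.dim_dual]; exact hg) k
  rwa [C.dual_dual] at this

lemma exists_act {g : C.I} (hg : C.dim g = 1) (i : C.I) :
    ∃ k, C.N g i k = 1 ∧ ∀ k', k' ≠ k → C.N g i k' = 0 := by
  have hid1 : ∀ j l, ∑ m, C.N g j m * C.N (C.dual g) m l = if l = j then 1 else 0 := by
    intro j l
    have h := C.N_assoc (C.dual g) g j l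
    have hl : ∑ m, C.N (C.dual g) g m * C.N m j l = if l = j then 1 else 0 := by
      rw [Finset.sum_eq_single C.one]
      · rw [N_dual_self hg, C.N_one_left]; simp
      · intro m _ hm; rw [N_dual_self hg]; simp [hm]
      · simp
    rw [hl] at h; exact h.symm
  have hid2 : ∀ j l, ∑ m, C.N (C.dual g) j m * C.N g m l = if l = j then 1 else 0 := by
    intro j l
    have h := C.N_assoc g (C.dual g) j l
    have hl : ∑ m, C.N g (C.dual g) m * C.N m j l = if l = j then 1 else 0 := by
      rw [Finset.sum_eq_single C.one]
      · rw [N_self_dual hg, C.N_one_left]; simp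
      · intro m _ hm; rw [N_self_dual hg]; simp [hm]
      · simp
    rw [hl] at h; exact h.symm
  have h1 : ∑ m, C.N g i m * C.N (C.dual g) m i = 1 := by
    simpa using hid1 i i
  have h2 : ∃ m, C.N g i m * C.N (C.dual g) m i ≠ 0 := by
    by_contra hc
    push_neg at hc
    rw [Finset.sum_eq_zero (fun m _ => hc m)] at h1
    simp at h1
  obtain ⟨k, hk⟩ := h2
  have hB : 0 < C.N (C.dual g) k i := Nat.pos_of_ne_zero (fun h => hk (by rw [h, mul_zero]))
  have hrow : ∀ k', k' ≠ k → C.N g i k' = 0 := by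
    intro k' hk'
    have h4 := hid2 k k'
    rw [if_neg hk'] at h4
    have h5 := (Finset.sum_eq_zero_iff_of_nonneg (fun l _ => Nat.zero_le _)).mp h4 i
      (Finset.mem_univ i)
    rcases Nat.mul_eq_zero.mp h5 with h6 | h6
    · exact absurd h6 hB.ne'
    · exact h6
  refine ⟨k, ?_, hrow⟩
  rw [Finset.sum_eq_single k] at h1
  · exact Nat.dvd_one.mp ⟨_, h1.symm⟩
  · intro m _ hm
    rw [hrow m hm, zero_mul]
  · simp

end Invertible

end FusionData

namespace FusionData

variable {C : FusionData}

/-- The action of an invertible simple on simples. -/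
noncomputable def act (C : FusionData) (g i : C.I) : C.I :=
  if h : ∃ k, C.N g i k = 1 ∧ ∀ k', k' ≠ k → C.N g i k' = 0 then h.choose else i

section ActLemmas

variable {g h : C.I}

lemma act_spec (hg : C.dim g = 1) (i : C.I) :
    C.N g i (C.act g i) = 1 ∧ ∀ k', k' ≠ C.act g i → C.N g i k' = 0 := by
  have hex := exists_act hg i
  rw [act, dif_pos hex]
  exact hex.choose_spec

lemma N_act_eq_ite (hg : C.dim g = 1) (i k : C.I) :
    C.N g i k = if k = C.act g i then 1 else 0 := by
  obtain ⟨h1, h2⟩ := act_spec hg i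
  by_cases hk : k = C.act g i
  · rw [if_pos hk, hk, h1]
  · rw [if_neg hk, h2 k hk]

lemma act_eq_of_pos (hg : C.dim g = 1) {i k : C.I} (hpos : 0 < C.N g i k) : C.act g i = k := by
  by_contra hne
  rw [(act_spec hg i).2 k (fun h => hne h.symm)] at hpos
  exact lt_irrefl 0 hpos

lemma dim_act (hg : C.dim g = 1) (i : C.I) : C.dim (C.act g i) = C.dim i := by
  have h := C.dim_mul g i
  rw [hg, one_mul] at h
  have : ∑ k, (C.N g i k : ℝ) * C.dim k = C.dim (C.act g i) := by
    rw [Finset.sum_eq_single (C.act g i)]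
    · rw [(act_spec hg i).1]; norm_num
    · intro m _ hm; rw [(act_spec hg i).2 m hm]; norm_num
    · simp
  rw [this] at h
  exact h.symm

lemma act_act (hg : C.dim g = 1) (hh : C.dim h = 1) (i : C.I) :
    C.act (C.act g h) i = C.act g (C.act h i) := by
  have hgh : C.dim (C.act g h) = 1 := by rw [dim_act hg]; exact hh
  have key : ∀ l, C.N (C.act g h) i l = C.N g (C.act h i) l := by
    intro l
    have ha := C.N_assoc g h i l
    have hl : ∑ m, C.N g h m * C.N m i l = C.N (C.act g h) i l := by
      rw [Finset.sum_eq_single (C.act g h)]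
      · rw [(act_spec hg h).1, one_mul]
      · intro m _ hm; rw [(act_spec hg h).2 m hm, zero_mul]
      · simp
    have hr : ∑ m, C.N h i m * C.N g m l = C.N g (C.act h i) l := by
      rw [Finset.sum_eq_single (C.act h i)]
      · rw [(act_spec hh i).1, one_mul]
      · intro m _ hm; rw [(act_spec hh i).2 m hm, zero_mul]
      · simp
    rw [hl, hr] at ha
    exact ha
  apply act_eq_of_pos hgh
  rw [key]
  rw [(act_spec hg (C.act h i)).1]
  norm_num

lemma act_one_right (hg : C.dim g = 1) : C.act g C.one = g := by
  apply act_eq_of_pos hg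
  rw [C.N_one_right]
  simp

lemma act_one_left (i : C.I) : C.act C.one i = i := by
  apply act_eq_of_pos C.dim_one
  rw [C.N_one_left]
  simp

lemma act_dual_self (hg : C.dim g = 1) : C.act (C.dual g) g = C.one := by
  apply act_eq_of_pos (by rw [C.dim_dual]; exact hg)
  rw [C.N_dual, C.dual_dual]
  simp

lemma act_self_dual (hg : C.dim g = 1) : C.act g (C.dual g) = C.one := by
  apply act_eq_of_pos hg
  rw [N_self_dual hg]
  simp

end ActLemmas

/-- The group of invertible simple objects. -/
abbrev Inv (C : FusionData) : Type := {g : C.I // C.dim g = 1}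

noncomputable instance : Group C.Inv where
  mul g h := ⟨C.act g.1 h.1, by rw [dim_act g.2]; exact h.2⟩
  one := ⟨C.one, C.dim_one⟩
  inv g := ⟨C.dual g.1, by rw [C.dim_dual]; exact g.2⟩
  mul_assoc a b c := Subtype.ext (act_act a.2 b.2 c.1)
  one_mul a := Subtype.ext (act_one_left a.1)
  mul_one a := Subtype.ext (act_one_right a.2)
  inv_mul_cancel a := Subtype.ext (act_dual_self a.2)

@[simp] lemma Inv.coe_mul (a b : C.Inv) : ((a * b : C.Inv) : C.I) = C.act a.1 b.1 := rfl
@[simp] lemma Inv.coe_one : ((1 : C.Inv) : C.I) = C.one := rfl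
@[simp] lemma Inv.coe_inv (a : C.Inv) : ((a⁻¹ : C.Inv) : C.I) = C.dual a.1 := rfl

noncomputable instance : MulAction C.Inv C.I where
  smul g i := C.act g.1 i
  one_smul i := act_one_left i
  mul_smul a b i := act_act a.2 b.2 i

@[simp] lemma Inv.smul_def (a : C.Inv) (i : C.I) : a • i = C.act a.1 i := rfl

section GradingLemmas

variable {G : Type*} [Group G] (gr : C.Grading G)

lemma Grading.deg_act {g : C.I} (hg : C.dim g = 1) (i : C.I) :
    gr.deg (C.act g i) = gr.deg g * gr.deg i := by
  apply gr.deg_mul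
  rw [(act_spec hg i).1]
  norm_num

lemma Grading.deg_coe_mul (a b : C.Inv) :
    gr.deg ↑(a * b) = gr.deg ↑a * gr.deg ↑b := gr.deg_act a.2 b.1

lemma Grading.deg_coe_pow (a : C.Inv) (n : ℕ) :
    gr.deg ↑(a ^ n) = (gr.deg ↑a) ^ n := by
  induction n with
  | zero => simpa using gr.deg_one
  | succ n ih => rw [pow_succ, pow_succ, gr.deg_coe_mul, ih]

end GradingLemmas

/-- In a non-pointed `ℤ_q`-extension, all invertibles live in the trivial component. -/
lemma inv_deg_eq_one {q : ℕ} (hq : q.Prime) (ext : C.ZqExtension q) (hnp : ¬ C.Pointed)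
    {g : C.I} (hg : C.dim g = 1) : ext.grading.deg g = 1 := by
  by_contra hx
  apply hnp
  intro j
  haveI : NeZero q := ⟨hq.ne_zero⟩
  set y : Multiplicative (ZMod q) := ext.grading.deg g with hy
  have hcard : Nat.card (Multiplicative (ZMod q)) = q := by
    simp [Nat.card_eq_fintype_card, ZMod.card]
  have hord : orderOf y = q := by
    have h1 : orderOf y ∣ q := (orderOf_dvd_natCard y).trans (dvd_of_eq hcard)
    rcases (Nat.Prime.eq_one_or_self_of_dvd hq _ h1) with h2 | h2
    · exact absurd (orderOf_eq_one_iff.mp h2) hx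
    · exact h2
  have htop : Subgroup.zpowers y = ⊤ := by
    apply Subgroup.eq_top_of_card_eq
    rw [Nat.card_zpowers, hord, hcard]
  have hmem : ext.grading.deg j ∈ Subgroup.zpowers y := by rw [htop]; exact Subgroup.mem_top _
  rw [← mem_powers_iff_mem_zpowers] at hmem
  obtain ⟨n, hn⟩ := hmem
  set u : C.Inv := (⟨g, hg⟩ : C.Inv) ^ n
  have hdegu : ext.grading.deg ↑u = y ^ n := ext.grading.deg_coe_pow _ n
  have hdim : C.dim ((u⁻¹ : C.Inv) • j) = C.dim j := dim_act (u⁻¹).2 j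
  have hdeg : ext.grading.deg ((u⁻¹ : C.Inv) • j) = 1 := by
    rw [Inv.smul_def, ext.grading.deg_act (u⁻¹).2 j, Inv.coe_inv, ext.grading.deg_dual]
    rw [hdegu, ← hn]
    exact inv_mul_cancel _
  have := ext.trivial_pointed _ hdeg
  rw [hdim] at this
  exact this

end FusionData

namespace FusionData

variable {C : FusionData}

open Classical in
lemma FPdimSet_translate {G : Type*} [Group G] (deg : C.I → G)
    (hgr : ∀ j k l, 0 < C.N j k l → deg l = deg j * deg k)
    (i0 : C.I) (y : G) :
    C.FPdimSet {j | deg j = y} = C.FPdimSet {j | deg j = deg i0 * y} := by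
  classical
  have hkey : ∀ k, (∑ j, if deg j = y then (C.N i0 j k : ℝ) * C.dim j else 0)
      = if deg k = deg i0 * y then C.dim i0 * C.dim k else 0 := by
    intro k
    by_cases hk : deg k = deg i0 * y
    · rw [if_pos hk, ← sum_N_dim_mid i0 k]
      apply Finset.sum_congr rfl
      intro j _
      by_cases hN : 0 < C.N i0 j k
      · have : deg j = y := by
          have h1 := hgr i0 j k hN
          rw [h1] at hk
          exact mul_left_cancel hk
        simp [this]
      · have : C.N i0 j k = 0 := Nat.eq_zero_of_not_pos hN
        simp [this]
    · rw [if_neg hk]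
      apply Finset.sum_eq_zero
      intro j _
      by_cases hj : deg j = y
      · simp only [hj, if_true]
        by_cases hN : 0 < C.N i0 j k
        · exact absurd (by rw [hgr i0 j k hN, hj]) hk
        · rw [Nat.eq_zero_of_not_pos hN]; norm_num
      · simp [hj]
  have hmain : C.dim i0 * C.FPdimSet {j | deg j = y}
      = C.dim i0 * C.FPdimSet {j | deg j = deg i0 * y} := by
    unfold FPdimSet
    simp only [Set.mem_setOf_eq]
    rw [Finset.mul_sum]
    calc ∑ j, C.dim i0 * (if deg j = y then C.dim j ^ 2 else 0)
        = ∑ j, ∑ k, (if deg j = y then (C.N i0 j k : ℝ) * C.dim k * C.dim j else 0) := by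
          apply Finset.sum_congr rfl
          intro j _
          by_cases hj : deg j = y
          · simp only [hj, if_true]
            rw [← Finset.sum_mul, ← C.dim_mul]
            ring
          · simp [hj]
      _ = ∑ k, ∑ j, (if deg j = y then (C.N i0 j k : ℝ) * C.dim k * C.dim j else 0) :=
          Finset.sum_comm
      _ = ∑ k, (∑ j, if deg j = y then (C.N i0 j k : ℝ) * C.dim j else 0) * C.dim k := by
          apply Finset.sum_congr rfl
          intro k _
          rw [Finset.sum_mul]
          apply Finset.sum_congr rfl
          intro j _
          by_cases hj : deg j = y
          · simp only [hj, if_true]; ring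
          · simp [hj]
      _ = ∑ k, (if deg k = deg i0 * y then C.dim i0 * C.dim k else 0) * C.dim k := by
          apply Finset.sum_congr rfl
          intro k _
          rw [hkey k]
      _ = ∑ k, C.dim i0 * (if deg k = deg i0 * y then C.dim k ^ 2 else 0) := by
          apply Finset.sum_congr rfl
          intro k _
          by_cases hk : deg k = deg i0 * y
          · simp only [hk, if_true]; ring
          · simp [hk]
      _ = C.dim i0 * ∑ k, (if deg k = deg i0 * y then C.dim k ^ 2 else 0) :=
          (Finset.mul_sum _ _ _).symm
  exact mul_left_cancel₀ (dim_ne_zero i0) hmain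

open Classical in
lemma FPdim_eq_sum_image {G : Type*} (deg : C.I → G) :
    C.FPdim = ∑ x ∈ Finset.univ.image deg, C.FPdimSet {j | deg j = x} := by
  classical
  unfold FPdim FPdimSet
  simp only [Set.mem_setOf_eq]
  rw [Finset.sum_comm]
  apply Finset.sum_congr rfl
  intro i _
  rw [Finset.sum_ite_eq (Finset.univ.image deg) (deg i) (fun _ => C.dim i ^ 2)]
  rw [if_pos (Finset.mem_image_of_mem deg (Finset.mem_univ i))]

open Classical in
lemma FPdim_eq_card_mul {G : Type*} [Group G] [Fintype G] (gr : C.Grading G)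
    (hf : Function.Surjective gr.deg) :
    C.FPdim = (Fintype.card G : ℝ) * C.FPdimSet {j | gr.deg j = 1} := by
  classical
  have himg : Finset.univ.image gr.deg = Finset.univ := by
    apply Finset.eq_univ_of_forall
    intro x
    obtain ⟨i, hi⟩ := hf x
    exact hi ▸ Finset.mem_image_of_mem _ (Finset.mem_univ i)
  rw [FPdim_eq_sum_image gr.deg, himg]
  have hconst : ∀ x : G, C.FPdimSet {j | gr.deg j = x} = C.FPdimSet {j | gr.deg j = 1} := by
    intro x
    obtain ⟨i0, hi0⟩ := hf x
    have := FPdimSet_translate gr.deg (fun j k l h => gr.deg_mul j k l h) i0 1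
    rw [mul_one, hi0] at this
    exact this.symm
  rw [Finset.sum_congr rfl (fun x _ => hconst x), Finset.sum_const, Finset.card_univ,
    nsmul_eq_mul]

open Classical in
lemma FPdimSet_eq_card {S : Set C.I} (hS : ∀ i ∈ S, C.dim i = 1) :
    C.FPdimSet S = ((Finset.univ.filter (fun i => i ∈ S)).card : ℝ) := by
  classical
  unfold FPdimSet
  rw [Finset.card_filter]
  push_cast
  apply Finset.sum_congr rfl
  intro i _
  by_cases hi : i ∈ S
  · simp [hi, hS i hi]
  · simp [hi]

end FusionData

namespace FusionData

variable {C : FusionData}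

/-- Bundled S-matrix data. -/
structure SData (C : FusionData) where
  s : Matrix C.I C.I ℂ
  s' : Matrix C.I C.I ℂ
  hsym : ∀ i j, s i j = s j i
  hrow : ∀ i, s C.one i = (C.dim i : ℂ)
  hver : ∀ i j k, s i j * s i k = (C.dim i : ℂ) * ∑ l, (C.N j k l : ℂ) * s i l
  hss' : s * s' = 1
  hs's : s' * s = 1

lemma dim_complex_ne_zero (i : C.I) : ((C.dim i : ℝ) : ℂ) ≠ 0 := by
  exact_mod_cast (dim_ne_zero (C := C) i)

/-- The normalized characters of the S-matrix. -/
noncomputable def psi (S : SData C) (i j : C.I) : ℂ := S.s i j / (C.dim i : ℂ)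

lemma psi_unit (S : SData C) (i : C.I) : psi S i C.one = 1 := by
  unfold psi
  rw [S.hsym, S.hrow, div_self (dim_complex_ne_zero i)]

lemma psi_one (S : SData C) (j : C.I) : psi S C.one j = (C.dim j : ℂ) := by
  unfold psi
  rw [S.hrow, C.dim_one]
  norm_num

lemma psi_char (S : SData C) (i j k : C.I) :
    psi S i j * psi S i k = ∑ l, (C.N j k l : ℂ) * psi S i l := by
  unfold psi
  rw [div_mul_div_comm, S.hver, mul_div_mul_left _ _ (dim_complex_ne_zero i), Finset.sum_div]
  apply Finset.sum_congr rfl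
  intro l _
  rw [mul_div_assoc]

lemma psi_mul (S : SData C) (i : C.I) (a b : C.Inv) :
    psi S i ↑(a * b) = psi S i ↑a * psi S i ↑b := by
  rw [psi_char S i ↑a ↑b]
  rw [Finset.sum_eq_single (C.act ↑a ↑b)]
  · rw [(act_spec a.2 b.1).1]; norm_num
  · intro m _ hm; rw [(act_spec a.2 b.1).2 m hm]; norm_num
  · simp

lemma psi_inv_mul_cancel (S : SData C) (i : C.I) (a : C.Inv) :
    psi S i ↑a * psi S i ↑(a⁻¹) = 1 := by
  rw [← psi_mul, mul_inv_cancel, Inv.coe_one, psi_unit]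

/-- The character of the group of invertibles attached to a simple object. -/
noncomputable def Dchar (S : SData C) (i : C.I) : C.Inv →* ℂˣ where
  toFun g := ⟨psi S i ↑g, psi S i ↑(g⁻¹), psi_inv_mul_cancel S i g, by
    have := psi_inv_mul_cancel S i g⁻¹
    rwa [inv_inv] at this⟩
  map_one' := by
    ext
    exact psi_unit S i
  map_mul' a b := by
    ext
    exact psi_mul S i a b

@[simp] lemma Dchar_val (S : SData C) (i : C.I) (g : C.Inv) :
    ((Dchar S i g : ℂˣ) : ℂ) = psi S i ↑g := rfl

lemma psi_inv_ne_zero (S : SData C) (i : C.I) (g : C.Inv) : psi S i ↑g ≠ 0 :=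
  (Dchar S i g).ne_zero

lemma abs_psi_inv (S : SData C) (i : C.I) (g : C.Inv) : ‖psi S i ↑g‖ = 1 := by
  have hord : g ^ (orderOf g) = 1 := pow_orderOf_eq_one g
  have hpow : (Dchar S i g) ^ (orderOf g) = 1 := by
    rw [← map_pow, hord, map_one]
  have habs : ‖psi S i ↑g‖ ^ (orderOf g) = 1 := by
    have := congrArg (fun u : ℂˣ => ‖(u : ℂ)‖) hpow
    simpa [map_pow] using this
  have hpos : 0 < orderOf g := orderOf_pos g
  by_contra hne
  rcases lt_or_gt_of_ne hne with hlt | hgt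
  · have := pow_lt_one₀ (norm_nonneg _) hlt hpos.ne'
    rw [habs] at this
    exact lt_irrefl 1 this
  · have := one_lt_pow₀ hgt hpos.ne'
    rw [habs] at this
    exact lt_irrefl 1 this

/-- `ψ` of the row of an invertible, written via columns. -/
lemma psi_inv_row (S : SData C) (g : C.Inv) (x : C.I) :
    psi S ↑g x = (C.dim x : ℂ) * psi S x ↑g := by
  unfold psi
  have h1 : ((C.dim ↑g : ℝ) : ℂ) = 1 := by rw [g.2]; norm_num
  rw [h1, div_one, S.hsym]
  field_simp
  rw [mul_div_cancel_right₀ _ (dim_complex_ne_zero x)]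

lemma complex_eq_one_of_abs_re (z : ℂ) (h1 : ‖z‖ = 1) (h2 : z.re = 1) : z = 1 := by
  have hsq : Complex.normSq z = 1 := by
    rw [← Complex.sq_norm, h1]; norm_num
  rw [Complex.normSq_apply, h2] at hsq
  have him : z.im = 0 := by nlinarith
  exact Complex.ext h2 him

/-- Triangle-equality: the invertible characters define a grading. -/
lemma grade_rel (S : SData C) (g : C.Inv) {j k l : C.I} (hN : 0 < C.N j k l) :
    psi S l ↑g = psi S j ↑g * psi S k ↑g := by
  classical
  set u : ℂ := psi S j ↑g * psi S k ↑g with hu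
  have habsu : ‖u‖ = 1 := by
    rw [hu, norm_mul, abs_psi_inv, abs_psi_inv]; norm_num
  set w : ℂ := (starRingEnd ℂ) u with hw
  have hwu : w * u = 1 := by
    rw [hw, mul_comm, Complex.mul_conj]
    norm_cast
    rw [← Complex.sq_norm, habsu]
    norm_num
  set a : C.I → ℝ := fun x => (C.N j k x : ℝ) * C.dim x with ha
  have hanneg : ∀ x, 0 ≤ a x := fun x => mul_nonneg (Nat.cast_nonneg _) (dim_pos x).le
  have hsuma : ∑ x, a x = C.dim j * C.dim k := (C.dim_mul j k).symm
  have E1 : ∑ x, (a x : ℂ) * psi S x ↑g = ((C.dim j * C.dim k : ℝ) : ℂ) * u := by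
    have hchar := psi_char S ↑g j k
    rw [psi_inv_row S g j, psi_inv_row S g k] at hchar
    calc ∑ x, (a x : ℂ) * psi S x ↑g
        = ∑ x, (C.N j k x : ℂ) * psi S ↑g x := by
          apply Finset.sum_congr rfl
          intro x _
          rw [psi_inv_row S g x, ha]
          push_cast
          ring
      _ = (C.dim j : ℂ) * psi S j ↑g * ((C.dim k : ℂ) * psi S k ↑g) := hchar.symm
      _ = ((C.dim j * C.dim k : ℝ) : ℂ) * u := by
          rw [hu]
          push_cast
          ring
  have E2 : ∑ x, a x * (1 - (w * psi S x ↑g).re) = 0 := by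
    have h1 : (∑ x, (a x : ℂ) * (w * psi S x ↑g)) = ((C.dim j * C.dim k : ℝ) : ℂ) := by
      calc ∑ x, (a x : ℂ) * (w * psi S x ↑g)
          = w * ∑ x, (a x : ℂ) * psi S x ↑g := by
            rw [Finset.mul_sum]
            apply Finset.sum_congr rfl
            intro x _
            ring
        _ = ((C.dim j * C.dim k : ℝ) : ℂ) * (w * u) := by rw [E1]; ring
        _ = _ := by rw [hwu, mul_one]
    have h2 : (∑ x, (a x : ℂ) * (w * psi S x ↑g)).re = ∑ x, a x * (w * psi S x ↑g).re := by
      rw [Complex.re_sum]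
      apply Finset.sum_congr rfl
      intro x _
      exact Complex.re_ofReal_mul _ _
    rw [h1] at h2
    have h3 : ∑ x, a x * (w * psi S x ↑g).re = C.dim j * C.dim k := by
      rw [← h2]
      simp
    have : ∑ x, a x * (1 - (w * psi S x ↑g).re) = ∑ x, a x - ∑ x, a x * (w * psi S x ↑g).re := by
      rw [← Finset.sum_sub_distrib]
      apply Finset.sum_congr rfl
      intro x _
      ring
    rw [this, h3, hsuma, sub_self]
  have hterm : ∀ x ∈ Finset.univ, 0 ≤ a x * (1 - (w * psi S x ↑g).re) := by
    intro x _
    apply mul_nonneg (hanneg x)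
    have hre : (w * psi S x ↑g).re ≤ 1 := by
      have := Complex.re_le_norm (w * psi S x ↑g)
      rw [norm_mul] at this
      rw [hw, Complex.norm_conj, habsu, abs_psi_inv, one_mul] at this
      exact this
    linarith
  have hl0 := (Finset.sum_eq_zero_iff_of_nonneg hterm).mp E2 l (Finset.mem_univ l)
  have hal : 0 < a l := mul_pos (by exact_mod_cast hN) (dim_pos l)
  have hre1 : (w * psi S l ↑g).re = 1 := by
    rcases mul_eq_zero.mp hl0 with h | h
    · exact absurd h hal.ne'
    · linarith
  have habswl : ‖w * psi S l ↑g‖ = 1 := by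
    rw [norm_mul, hw, Complex.norm_conj, habsu, abs_psi_inv, one_mul]
  have := complex_eq_one_of_abs_re _ habswl hre1
  have hwne : w ≠ 0 := by
    intro h
    rw [h, zero_mul] at hwu
    exact zero_ne_one hwu
  calc psi S l ↑g = w⁻¹ * (w * psi S l ↑g) := by field_simp
    _ = w⁻¹ * (w * u) := by rw [this, hwu]
    _ = u := by field_simp

end FusionData

namespace FusionData

variable {C : FusionData}

/-- The set of simples centralizing the pointed part. -/
def Zset (S : SData C) : Set C.I := {i | ∀ g : C.Inv, psi S i ↑g = 1}

lemma one_mem_Zset (S : SData C) : C.one ∈ Zset S := by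
  intro g
  rw [psi_one]
  exact_mod_cast g.2

lemma psi_dual_inv (S : SData C) (i : C.I) (g : C.Inv) :
    psi S (C.dual i) ↑g = (psi S i ↑g)⁻¹ := by
  have hN : 0 < C.N i (C.dual i) C.one := by rw [C.N_dual]; simp
  have h := grade_rel S g hN
  have h1 : psi S C.one ↑g = 1 := one_mem_Zset S g
  rw [h1] at h
  exact eq_inv_of_mul_eq_one_right h.symm

lemma adSet_subset_Zset (S : SData C) : C.adSet ⊆ Zset S := by
  intro i hi
  induction hi with
  | base h =>
    obtain ⟨i', hpos⟩ := h
    intro g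
    rw [grade_rel S g hpos, psi_dual_inv, mul_inv_cancel₀ (psi_inv_ne_zero S i' g)]
  | one => exact one_mem_Zset S
  | dual h ih => intro g; rw [psi_dual_inv, ih g, inv_one]
  | mul h1 h2 hN ih1 ih2 => intro g; rw [grade_rel S g hN, ih1 g, ih2 g, one_mul]

lemma Zset_mul_mem (S : SData C) {j k l : C.I} (hj : j ∈ Zset S) (hk : k ∈ Zset S)
    (hN : 0 < C.N j k l) : l ∈ Zset S := by
  intro g
  rw [grade_rel S g hN, hj g, hk g, one_mul]

/-- A linear combination of rows of `s` vanishing identically has zero coefficients. -/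
lemma row_comb_zero (S : SData C) (x : C.I → ℂ) (hx : ∀ k, ∑ i, x i * S.s i k = 0)
    (l : C.I) : x l = 0 := by
  classical
  have h1 : x l = ∑ i, x i * (S.s * S.s') i l := by
    rw [show (S.s * S.s' : Matrix C.I C.I ℂ) = 1 from S.hss']
    rw [Finset.sum_eq_single l]
    · rw [Matrix.one_apply_eq, mul_one]
    · intro m _ hm
      rw [Matrix.one_apply_ne hm, mul_zero]
    · simp
  rw [h1]
  calc ∑ i, x i * (S.s * S.s') i l
      = ∑ i, ∑ k, x i * S.s i k * S.s' k l := by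
        apply Finset.sum_congr rfl
        intro i _
        rw [Matrix.mul_apply, Finset.mul_sum]
        apply Finset.sum_congr rfl
        intro k _
        ring
    _ = ∑ k, ∑ i, x i * S.s i k * S.s' k l := Finset.sum_comm
    _ = ∑ k, (∑ i, x i * S.s i k) * S.s' k l := by
        apply Finset.sum_congr rfl
        intro k _
        rw [Finset.sum_mul]
    _ = 0 := by
        apply Finset.sum_eq_zero
        intro k _
        rw [hx k, zero_mul]

/-- Completeness: every character vector is a row of `s`. -/
lemma exists_char_row (S : SData C) (v : C.I → ℂ)
    (hv : ∀ j k, v j * v k = ∑ l, (C.N j k l : ℂ) * v l) (hv1 : v C.one = 1) :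
    ∃ i0 : C.I, ∀ j, psi S i0 j = v j := by
  classical
  set c : C.I → ℂ := fun i => ∑ j, v j * S.s' j i with hc
  have hvc : ∀ j, ∑ i, c i * S.s i j = v j := by
    intro j
    calc ∑ i, c i * S.s i j
        = ∑ i, ∑ k, v k * S.s' k i * S.s i j := by
          apply Finset.sum_congr rfl
          intro i _
          rw [hc, Finset.sum_mul]
      _ = ∑ k, ∑ i, v k * S.s' k i * S.s i j := Finset.sum_comm
      _ = ∑ k, v k * (S.s' * S.s) k j := by
          apply Finset.sum_congr rfl
          intro k _
          rw [Matrix.mul_apply, Finset.mul_sum]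
          apply Finset.sum_congr rfl
          intro i _
          ring
      _ = v j := by
          rw [show (S.s' * S.s : Matrix C.I C.I ℂ) = 1 from S.hs's]
          rw [Finset.sum_eq_single j]
          · rw [Matrix.one_apply_eq, mul_one]
          · intro m _ hm
            rw [Matrix.one_apply_ne hm, mul_zero]
          · simp
  have hkey : ∀ j i, c i * (psi S i j - v j) = 0 := by
    intro j
    set x : C.I → ℂ := fun i => c i * (psi S i j - v j) with hxdef
    have hx : ∀ k, ∑ i, x i * S.s i k = 0 := by
      intro k
      have e1 : ∑ i, c i * psi S i j * S.s i k = v j * v k := by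
        calc ∑ i, c i * psi S i j * S.s i k
            = ∑ i, c i * ∑ l, (C.N j k l : ℂ) * S.s i l := by
              apply Finset.sum_congr rfl
              intro i _
              have h2 : psi S i j * S.s i k = ∑ l, (C.N j k l : ℂ) * S.s i l := by
                unfold psi
                rw [div_mul_eq_mul_div, S.hver, mul_comm ((C.dim i : ℝ) : ℂ),
                  mul_div_assoc, div_self (dim_complex_ne_zero i), mul_one]
              rw [mul_assoc, h2]
          _ = ∑ l, (C.N j k l : ℂ) * ∑ i, c i * S.s i l := by
              calc ∑ i, c i * ∑ l, (C.N j k l : ℂ) * S.s i l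
                  = ∑ i, ∑ l, c i * ((C.N j k l : ℂ) * S.s i l) := by
                    apply Finset.sum_congr rfl
                    intro i _
                    rw [Finset.mul_sum]
                _ = ∑ l, ∑ i, c i * ((C.N j k l : ℂ) * S.s i l) := Finset.sum_comm
                _ = ∑ l, (C.N j k l : ℂ) * ∑ i, c i * S.s i l := by
                    apply Finset.sum_congr rfl
                    intro l _
                    rw [Finset.mul_sum]
                    apply Finset.sum_congr rfl
                    intro i _
                    ring
          _ = ∑ l, (C.N j k l : ℂ) * v l := by
              apply Finset.sum_congr rfl
              intro l _
              rw [hvc l]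
          _ = v j * v k := (hv j k).symm
      have e2 : ∑ i, c i * v j * S.s i k = v j * v k := by
        calc ∑ i, c i * v j * S.s i k = v j * ∑ i, c i * S.s i k := by
              rw [Finset.mul_sum]
              apply Finset.sum_congr rfl
              intro i _
              ring
          _ = v j * v k := by rw [hvc k]
      calc ∑ i, x i * S.s i k
          = ∑ i, (c i * psi S i j * S.s i k - c i * v j * S.s i k) := by
            apply Finset.sum_congr rfl
            intro i _
            rw [hxdef]
            ring
        _ = (∑ i, c i * psi S i j * S.s i k) - ∑ i, c i * v j * S.s i k :=
            Finset.sum_sub_distrib _ _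
        _ = 0 := by rw [e1, e2, sub_self]
    exact fun i => row_comb_zero S x hx i
  have hex : ∃ i0, c i0 ≠ 0 := by
    by_contra hcon
    push_neg at hcon
    have := hvc C.one
    rw [Finset.sum_eq_zero (fun i _ => by rw [hcon i, zero_mul])] at this
    rw [hv1] at this
    exact one_ne_zero this.symm
  obtain ⟨i0, hi0⟩ := hex
  refine ⟨i0, fun j => ?_⟩
  have := hkey j i0
  rcases mul_eq_zero.mp this with h | h
  · exact absurd h hi0
  · exact sub_eq_zero.mp h

end FusionData

namespace FusionData

variable {C : FusionData}

lemma exists_constituent (i j : C.I) : ∃ l, 0 < C.N i j l := by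
  by_contra h
  push_neg at h
  have h0 : ∀ l, C.N i j l = 0 := fun l => Nat.le_zero.mp (h l)
  have hdm := C.dim_mul i j
  rw [Finset.sum_eq_zero (fun l _ => by rw [h0 l]; norm_num)] at hdm
  nlinarith [dim_pos (C := C) i, dim_pos (C := C) j]

/-- The subgroup of invertibles lying in the centralizer of the pointed part. -/
def Zsub (S : SData C) : Subgroup C.Inv where
  carrier := {g : C.Inv | (g : C.I) ∈ Zset S}
  mul_mem' := fun {a b} ha hb => by
    have hN : 0 < C.N ↑a ↑b ↑(a * b) := by
      rw [Inv.coe_mul, (act_spec a.2 b.1).1]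
      norm_num
    exact Zset_mul_mem S ha hb hN
  one_mem' := one_mem_Zset S
  inv_mem' := fun {a} ha => by
    show ((a⁻¹ : C.Inv) : C.I) ∈ Zset S
    intro g
    rw [Inv.coe_inv, psi_dual_inv, ha g, inv_one]

lemma mem_Zsub_iff (S : SData C) (g : C.Inv) : g ∈ Zsub S ↔ (g : C.I) ∈ Zset S := Iff.rfl

lemma col_inj (S : SData C) {x y : C.I} (h : ∀ i, S.s i x = S.s i y) : x = y := by
  by_contra hne
  have h1 : (S.s' * S.s) x x = 1 := by rw [S.hs's, Matrix.one_apply_eq]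
  have h2 : (S.s' * S.s) x y = 0 := by rw [S.hs's, Matrix.one_apply_ne hne]
  rw [Matrix.mul_apply] at h1 h2
  rw [Finset.sum_congr rfl (fun k _ => by rw [h k])] at h1
  rw [h2] at h1
  exact zero_ne_one h1

lemma Dchar_one (S : SData C) : Dchar S C.one = 1 := by
  ext g
  exact one_mem_Zset S g

lemma Dchar_mul_of_pos (S : SData C) {i j l : C.I} (h : 0 < C.N i j l) :
    Dchar S l = Dchar S i * Dchar S j := by
  ext g
  exact grade_rel S g h

lemma Dchar_dual (S : SData C) (i : C.I) : Dchar S (C.dual i) = (Dchar S i)⁻¹ := by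
  ext g
  rw [Dchar_val, psi_dual_inv]
  simp

lemma Dchar_eq_one_iff (S : SData C) (i : C.I) : Dchar S i = 1 ↔ i ∈ Zset S := by
  constructor
  · intro h g
    have := congrArg (fun f : C.Inv →* ℂˣ => ((f g : ℂˣ) : ℂ)) h
    simpa using this
  · intro h
    ext g
    exact h g

/-- The image of `Dchar` as a subgroup of the character group of invertibles. -/
def Tsub (S : SData C) : Subgroup (C.Inv →* ℂˣ) where
  carrier := Set.range (Dchar S)
  mul_mem' := fun {a b} ha hb => by
    obtain ⟨i, rfl⟩ := ha
    obtain ⟨j, rfl⟩ := hb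
    obtain ⟨l, hl⟩ := exists_constituent (C := C) i j
    exact ⟨l, Dchar_mul_of_pos S hl⟩
  one_mem' := ⟨C.one, Dchar_one S⟩
  inv_mem' := fun {a} ha => by
    obtain ⟨i, rfl⟩ := ha
    exact ⟨C.dual i, Dchar_dual S i⟩

/-- Evaluation of characters in `Tsub` at invertibles. -/
noncomputable def evHom (S : SData C) : C.Inv →* ((Tsub S) →* ℂˣ) where
  toFun g :=
    { toFun := fun χ => (χ : C.Inv →* ℂˣ) g
      map_one' := rfl
      map_mul' := fun a b => rfl }
  map_one' := by
    ext χ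
    exact congrArg Units.val (map_one (χ : C.Inv →* ℂˣ))
  map_mul' g h := by
    ext χ
    exact congrArg Units.val (map_mul (χ : C.Inv →* ℂˣ) g h)

lemma evHom_injective (S : SData C) : Function.Injective (evHom S) := by
  intro g g' hgg'
  have hval : ∀ i : C.I, psi S i ↑g = psi S i ↑g' := by
    intro i
    have hmem : Dchar S i ∈ Tsub S := ⟨i, rfl⟩
    have := congrArg (fun f : (Tsub S) →* ℂˣ => ((f ⟨Dchar S i, hmem⟩ : ℂˣ) : ℂ)) hgg'
    exact this
  have hcol : ∀ i : C.I, S.s i ↑g = S.s i ↑g' := by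
    intro i
    have := hval i
    unfold psi at this
    rw [div_eq_div_iff (dim_complex_ne_zero i) (dim_complex_ne_zero i)] at this
    exact mul_right_cancel₀ (dim_complex_ne_zero i) this
  exact Subtype.ext (col_inj S hcol)

lemma numInv_eq_card_inv : C.numInv = Nat.card C.Inv := by
  classical
  unfold numInv
  rw [Nat.card_eq_fintype_card, Fintype.card_subtype]

end FusionData

namespace FusionData

variable {C : FusionData}

lemma zeta_val_add {q : ℕ} [NeZero q] {ζ : ℂ} (hζ : ζ ^ q = 1) (a b : ZMod q) :
    ζ ^ ((a + b).val) = ζ ^ a.val * ζ ^ b.val := by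
  rw [ZMod.val_add, ← pow_add]
  conv_rhs => rw [← Nat.div_add_mod (a.val + b.val) q]
  rw [pow_add, pow_mul, hζ, one_pow, one_mul]


open Classical in
lemma FPdim_eq_ncard_mul {G : Type*} [Group G] (deg : C.I → G)
    (hgr : ∀ j k l, 0 < C.N j k l → deg l = deg j * deg k) :
    C.FPdim = ((Set.range deg).ncard : ℝ) * C.FPdimSet {j | deg j = 1} := by
  classical
  have h1 : (Set.range deg).ncard = (Finset.univ.image deg).card := by
    rw [← Set.ncard_coe_finset]
    congr 1
    ext x
    simp
  have hbase : C.FPdim = ∑ x ∈ Finset.univ.image deg, C.FPdimSet {j | deg j = x} := by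
    unfold FPdim FPdimSet
    simp only [Set.mem_setOf_eq]
    rw [Finset.sum_comm]
    apply Finset.sum_congr rfl
    intro i _
    rw [Finset.sum_ite_eq (Finset.univ.image deg) (deg i) (fun _ => C.dim i ^ 2)]
    rw [if_pos (Finset.mem_image_of_mem deg (Finset.mem_univ i))]
  have hcomp : ∀ x ∈ Finset.univ.image deg,
      C.FPdimSet {j | deg j = x} = C.FPdimSet {j | deg j = 1} := by
    intro x hx
    obtain ⟨i0, _, hi0⟩ := Finset.mem_image.mp hx
    have htr := FPdimSet_translate deg hgr i0 1
    simp only [mul_one, hi0] at htr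
    exact htr.symm
  rw [hbase, Finset.sum_congr rfl hcomp, Finset.sum_const, nsmul_eq_mul, h1]

end FusionData

set_option maxHeartbeats 1000000 in
open FusionData in
theorem modular_extension_universal_grading
    (q : ℕ) (hq : q.Prime) (C : FusionData) (hmod : C.Modular)
    (ext : C.ZqExtension q) (hnp : ¬ C.Pointed) :
    (∀ (G : Type) [Group G] (g : C.Grading G), g.Faithful →
      {i : C.I | g.deg i = 1} = C.adSet →
      ∀ x : G, C.FPdimSet {i : C.I | g.deg i = x} = (q : ℝ)) ∧
    (∀ X : C.I, C.dim X ≠ 1 → C.dim X = Real.sqrt q) ∧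
    ¬ C.Integral := by
  classical
  obtain ⟨hbr, s, hsym, hrow, hver, hunit⟩ := hmod
  set s2 : Matrix C.I C.I ℂ := ((hunit.unit⁻¹ : (Matrix C.I C.I ℂ)ˣ) : Matrix C.I C.I ℂ)
    with hs2def
  have hss' : s * s2 = 1 := by
    have h := hunit.unit.mul_inv
    rwa [hunit.unit_spec] at h
  have hs's : s2 * s = 1 := by
    have h := hunit.unit.inv_mul
    rwa [hunit.unit_spec] at h
  set S : SData C :=
    { s := s, s' := s2, hsym := hsym, hrow := hrow, hver := hver,
      hss' := hss', hs's := hs's } with hSdef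
  haveI : NeZero q := ⟨hq.ne_zero⟩
  haveI := Fact.mk hq
  -- all invertibles have trivial degree
  have hinvdeg : ∀ g : C.Inv, ext.grading.deg ↑g = 1 :=
    fun g => inv_deg_eq_one hq ext hnp g.2
  -- FPdim = q * numInv
  have hFP1 : C.FPdim = (q : ℝ) * C.numInv := by
    have h := FPdim_eq_card_mul ext.grading ext.faithful
    rw [Fintype.card_multiplicative, ZMod.card] at h
    have h2 : {j : C.I | ext.grading.deg j = 1} = {j : C.I | C.dim j = 1} := by
      ext j
      exact ⟨fun hj => ext.trivial_pointed j hj, fun hj => hinvdeg ⟨j, hj⟩⟩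
    rw [h2, FPdimSet_eq_card (S := {j : C.I | C.dim j = 1}) (fun i hi => hi)] at h
    have h3 : (Finset.univ.filter (fun i : C.I => i ∈ {j : C.I | C.dim j = 1}))
        = Finset.univ.filter (fun i : C.I => C.dim i = 1) := by
      apply Finset.filter_congr
      intro i _
      simp [Set.mem_setOf_eq]
    rw [h3] at h
    rw [h]
    congr 2
  -- the twisted characters
  set dg : C.I → ZMod q := fun j => Multiplicative.toAdd (ext.grading.deg j) with hdgdef
  have hdg_mul : ∀ j k l, 0 < C.N j k l → dg l = dg j + dg k := by
    intro j k l h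
    simp only [hdgdef]
    rw [ext.grading.deg_mul j k l h, toAdd_mul]
  set ζ : ℂ := Complex.exp (2 * Real.pi * Complex.I / q) with hzdef
  have hζ : IsPrimitiveRoot ζ q := Complex.isPrimitiveRoot_exp q (NeZero.ne q)
  have hζq : ζ ^ q = 1 := hζ.pow_eq_one
  set v : ZMod q → C.I → ℂ := fun t j => ζ ^ ((t * dg j).val) * (C.dim j : ℂ) with hvdef
  have hv1 : ∀ t, v t C.one = 1 := by
    intro t
    simp only [hvdef]
    have h0 : dg C.one = 0 := by simp [hdgdef, ext.grading.deg_one]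
    rw [h0, mul_zero, ZMod.val_zero, pow_zero, one_mul, C.dim_one]
    norm_num
  have hvchar : ∀ t j k, v t j * v t k = ∑ l, (C.N j k l : ℂ) * v t l := by
    intro t j k
    have hstep : ∀ l, (C.N j k l : ℂ) * v t l
        = ζ ^ ((t * dg j).val) * ζ ^ ((t * dg k).val) * ((C.N j k l : ℂ) * (C.dim l : ℂ)) := by
      intro l
      by_cases hN : 0 < C.N j k l
      · have hl : dg l = dg j + dg k := hdg_mul j k l hN
        simp only [hvdef]
        rw [hl, mul_add, zeta_val_add hζq]
        ring
      · have h0 : C.N j k l = 0 := Nat.eq_zero_of_not_pos hN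
        rw [h0]
        push_cast
        ring
    have hdm : ((C.dim j : ℝ) : ℂ) * ((C.dim k : ℝ) : ℂ) = ∑ l, (C.N j k l : ℂ) * (C.dim l : ℂ) := by
      have := congrArg Complex.ofReal (C.dim_mul j k)
      push_cast at this
      exact this
    calc v t j * v t k
        = ζ ^ ((t * dg j).val) * ζ ^ ((t * dg k).val) * (((C.dim j : ℝ) : ℂ) * ((C.dim k : ℝ) : ℂ)) := by
          simp only [hvdef]
          ring
      _ = ζ ^ ((t * dg j).val) * ζ ^ ((t * dg k).val) * ∑ l, (C.N j k l : ℂ) * (C.dim l : ℂ) := by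
          rw [hdm]
      _ = ∑ l, (C.N j k l : ℂ) * v t l := by
          rw [Finset.mul_sum]
          apply Finset.sum_congr rfl
          intro l _
          rw [hstep l]
  have hit : ∀ t : ZMod q, ∃ i0, ∀ j, psi S i0 j = v t j :=
    fun t => exists_char_row S (v t) (hvchar t) (hv1 t)
  set it : ZMod q → C.I := fun t => (hit t).choose with hitdef
  have hits : ∀ t j, psi S (it t) j = v t j := fun t => (hit t).choose_spec
  have hitZ : ∀ t, it t ∈ Zset S := by
    intro t g
    rw [hits t ↑g]
    simp only [hvdef]
    have h0 : dg ↑g = 0 := by simp [hdgdef, hinvdeg g]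
    rw [h0, mul_zero, ZMod.val_zero, pow_zero, one_mul]
    exact_mod_cast g.2
  obtain ⟨j1, hj1⟩ := ext.faithful (Multiplicative.ofAdd (1 : ZMod q))
  have hdgj1 : dg j1 = 1 := by simp [hdgdef, hj1]
  have hitinj : Function.Injective it := by
    intro t t' htt'
    have h1 : v t j1 = v t' j1 := by rw [← hits t j1, ← hits t' j1, htt']
    simp only [hvdef, hdgj1, mul_one] at h1
    have h2 : ζ ^ t.val = ζ ^ t'.val := mul_right_cancel₀ (dim_complex_ne_zero j1) h1
    have h3 : t.val = t'.val := hζ.pow_inj (ZMod.val_lt t) (ZMod.val_lt t') h2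
    calc t = ((t.val : ℕ) : ZMod q) := (ZMod.natCast_rightInverse t).symm
      _ = ((t'.val : ℕ) : ZMod q) := by rw [h3]
      _ = t' := ZMod.natCast_rightInverse t'
  -- Z as a finset
  set Zf : Finset C.I := Finset.univ.filter (fun i => i ∈ Zset S) with hZfdef
  have hFzsum : C.FPdimSet (Zset S) = ∑ i ∈ Zf, C.dim i ^ 2 := by
    unfold FPdimSet
    rw [hZfdef, Finset.sum_filter]
  -- FPdim = (number of D-components) * FPdimSet Z
  have honeD : {j : C.I | Dchar S j = 1} = Zset S := by
    ext j
    exact Dchar_eq_one_iff S j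
  set nT : ℕ := (Set.range (Dchar S)).ncard with hnTdef
  have hFP2 : C.FPdim = (nT : ℝ) * C.FPdimSet (Zset S) := by
    have h := FPdim_eq_ncard_mul (Dchar S) (fun j k l hpos => Dchar_mul_of_pos S hpos)
    rwa [honeD] at h
  -- duality : numInv ≤ nT
  haveI hTfin : Finite ↥(Tsub S) := Set.Finite.to_subtype (Set.finite_range (Dchar S))
  haveI : NeZero ((Monoid.exponent ↥(Tsub S) : ℂ)) :=
    ⟨Nat.cast_ne_zero.mpr (Monoid.exponent_ne_zero_of_finite)⟩
  obtain ⟨e⟩ := CommGroup.monoidHom_mulEquiv_of_hasEnoughRootsOfUnity ↥(Tsub S) ℂ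
  haveI : Finite (↥(Tsub S) →* ℂˣ) := Finite.of_equiv _ e.symm.toEquiv
  have hcard1 : Nat.card C.Inv ≤ Nat.card (↥(Tsub S) →* ℂˣ) :=
    Nat.card_le_card_of_injective _ (evHom_injective S)
  have hcard2 : Nat.card (↥(Tsub S) →* ℂˣ) = Nat.card ↥(Tsub S) := Nat.card_congr e.toEquiv
  have hcard3 : Nat.card ↥(Tsub S) = nT := by
    calc Nat.card ↥(Tsub S)
        = Nat.card ↥(Set.range (Dchar S)) :=
          Nat.card_congr (Equiv.subtypeEquivRight (fun x => Iff.rfl))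
      _ = (Set.range (Dchar S)).ncard := Nat.card_coe_set_eq _
      _ = nT := rfl
  have hm_le : C.numInv ≤ nT := by
    rw [numInv_eq_card_inv]
    omega
  -- FPdimSet Z ≥ q
  set Sfin : Finset C.I := Finset.univ.image it with hSfindef
  have hSsub : Sfin ⊆ Zf := by
    intro i hi
    obtain ⟨t, _, rfl⟩ := Finset.mem_image.mp hi
    simp only [hZfdef, Finset.mem_filter, Finset.mem_univ, true_and]
    exact hitZ t
  have hScard : Sfin.card = q := by
    rw [hSfindef, Finset.card_image_of_injective _ hitinj, Finset.card_univ, ZMod.card]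
  have hFz_ge : (q : ℝ) ≤ C.FPdimSet (Zset S) := by
    rw [hFzsum]
    calc (q : ℝ) = ∑ _i ∈ Sfin, (1 : ℝ) := by rw [Finset.sum_const, hScard]; simp
      _ ≤ ∑ i ∈ Sfin, C.dim i ^ 2 := by
          apply Finset.sum_le_sum
          intro i _
          nlinarith [C.dim_ge_one i]
      _ ≤ ∑ i ∈ Zf, C.dim i ^ 2 :=
          Finset.sum_le_sum_of_subset_of_nonneg hSsub (fun i _ _ => sq_nonneg _)
  have hm1 : 1 ≤ C.numInv := by
    apply Finset.card_pos.mpr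
    exact ⟨C.one, by simp [C.dim_one]⟩
  -- FPdimSet Z = q
  have hFzq : C.FPdimSet (Zset S) = (q : ℝ) := by
    have heq : (q : ℝ) * C.numInv = (nT : ℝ) * C.FPdimSet (Zset S) := by
      rw [← hFP1, hFP2]
    have himgpos : (0 : ℝ) < nT := by
      have : (1 : ℕ) ≤ nT := le_trans hm1 hm_le
      exact_mod_cast lt_of_lt_of_le Nat.zero_lt_one this
    have hle : C.FPdimSet (Zset S) ≤ (q : ℝ) := by
      have h1 : (nT : ℝ) * C.FPdimSet (Zset S) ≤ (nT : ℝ) * q := by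
        rw [← heq]
        have h2 : (C.numInv : ℝ) ≤ (nT : ℝ) := by exact_mod_cast hm_le
        calc (q : ℝ) * C.numInv ≤ (q : ℝ) * nT := by
              apply mul_le_mul_of_nonneg_left h2 (Nat.cast_nonneg q)
          _ = (nT : ℝ) * q := by ring
      exact le_of_mul_le_mul_left h1 himgpos
    linarith
  -- every element of Z is invertible, and Zf.card = q
  have hZcard_le : (Zf.card : ℝ) ≤ (q : ℝ) := by
    calc (Zf.card : ℝ) = ∑ _i ∈ Zf, (1 : ℝ) := by rw [Finset.sum_const]; simp
      _ ≤ ∑ i ∈ Zf, C.dim i ^ 2 := by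
          apply Finset.sum_le_sum
          intro i _
          nlinarith [C.dim_ge_one i]
      _ = (q : ℝ) := by rw [← hFzsum, hFzq]
  have hZcard_ge : q ≤ Zf.card := by
    calc q = Sfin.card := hScard.symm
      _ ≤ Zf.card := Finset.card_le_card hSsub
  have hZfcard : Zf.card = q := by
    have : Zf.card ≤ q := by exact_mod_cast hZcard_le
    omega
  have hdim1 : ∀ i ∈ Zset S, C.dim i = 1 := by
    have hzero : ∑ i ∈ Zf, (C.dim i ^ 2 - 1) = 0 := by
      rw [Finset.sum_sub_distrib, ← hFzsum, hFzq, Finset.sum_const, hZfcard]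
      simp
    intro i hi
    have hiZ : i ∈ Zf := by
      simp only [hZfdef, Finset.mem_filter, Finset.mem_univ, true_and]
      exact hi
    have h := (Finset.sum_eq_zero_iff_of_nonneg
      (fun i _ => by nlinarith [C.dim_ge_one i])).mp hzero i hiZ
    nlinarith [C.dim_ge_one i]
  -- the invertibles in Z form a subgroup of order q
  have hZsubcard : Nat.card ↥(Zsub S) = q := by
    have e2 : ↥(Zsub S) ≃ {i : C.I // i ∈ Zset S} :=
      { toFun := fun u => ⟨↑u.1, u.2⟩
        invFun := fun i => ⟨⟨i.1, hdim1 i.1 i.2⟩, i.2⟩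
        left_inv := fun u => by
          apply Subtype.ext
          apply Subtype.ext
          rfl
        right_inv := fun i => rfl }
    rw [Nat.card_congr e2]
    have h4 : Zset S = ↑Zf := by
      ext i
      simp [hZfdef]
    calc Nat.card {i : C.I // i ∈ Zset S} = (Zset S).ncard := Nat.card_coe_set_eq _
      _ = (↑Zf : Set C.I).ncard := by rw [h4]
      _ = Zf.card := Set.ncard_coe_finset Zf
      _ = q := hZfcard
  -- analysis of a non-invertible simple
  have hkey : ∀ X : C.I, C.dim X ≠ 1 →
      (C.dim X ^ 2 = (q : ℝ) ∧ Finset.univ.filter (fun l => 0 < C.N X (C.dual X) l) = Zf) := by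
    intro X hX
    set Hf : Finset C.I := Finset.univ.filter (fun l => 0 < C.N X (C.dual X) l) with hHfdef
    have hconsZ : ∀ l, 0 < C.N X (C.dual X) l → l ∈ Zset S := by
      intro l h
      exact adSet_subset_Zset S (gen.base ⟨X, h⟩)
    have hconsdim : ∀ l, 0 < C.N X (C.dual X) l → C.dim l = 1 := by
      intro l h
      exact hdim1 l (hconsZ l h)
    have hfrob : ∀ l, C.N X (C.dual X) l = C.N (C.dual l) X X := by
      intro l
      rw [frob2 X (C.dual X) l, C.dual_dual]
    have hNle : ∀ l, C.dim l = 1 → C.N X (C.dual X) l ≤ 1 := by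
      intro l hl
      rw [hfrob l]
      rw [N_act_eq_ite (by rw [C.dim_dual]; exact hl) X X]
      split <;> omega
    have hcardH : C.dim X ^ 2 = (Hf.card : ℝ) := by
      have h1 := C.dim_mul X (C.dual X)
      rw [C.dim_dual] at h1
      have h2 : ∑ l, (C.N X (C.dual X) l : ℝ) * C.dim l = ∑ l ∈ Hf, (C.N X (C.dual X) l : ℝ) * C.dim l := by
        rw [hHfdef]
        rw [Finset.sum_filter_of_ne]
        intro x _ hne
        by_contra hc
        push_neg at hc
        rw [Nat.le_zero.mp hc] at hne
        norm_num at hne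
      have h3 : ∑ l ∈ Hf, (C.N X (C.dual X) l : ℝ) * C.dim l = Hf.card := by
        rw [Finset.card_eq_sum_ones, Nat.cast_sum]
        apply Finset.sum_congr rfl
        intro l hl
        rw [hHfdef, Finset.mem_filter] at hl
        have hpos := hl.2
        have hdl := hconsdim l hpos
        have hle := hNle l hdl
        have hNeq : C.N X (C.dual X) l = 1 := by omega
        rw [hNeq, hdl]
        norm_num
      rw [pow_two, h1, h2, h3]
    -- the stabilizer
    set stab : Subgroup C.Inv := MulAction.stabilizer C.Inv X with hstabdef
    have hstab_mem : ∀ u : C.Inv, u ∈ stab ↔ C.act ↑u X = X := by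
      intro u
      rw [hstabdef, MulAction.mem_stabilizer_iff]
      rfl
    have hfwd : ∀ u : C.Inv, u ∈ stab → 0 < C.N X (C.dual X) ↑u := by
      intro u hu
      have hui : u⁻¹ ∈ stab := inv_mem hu
      have : C.act ↑(u⁻¹) X = X := (hstab_mem _).mp hui
      rw [hfrob]
      have hcoe : C.dual ↑u = ↑(u⁻¹) := rfl
      rw [hcoe]
      rw [N_act_eq_ite (u⁻¹).2 X X]
      rw [if_pos this.symm]
      norm_num
    have hbwd : ∀ l (h : 0 < C.N X (C.dual X) l), (⟨l, hconsdim l h⟩ : C.Inv) ∈ stab := by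
      intro l h
      rw [← inv_mem_iff]
      rw [hstab_mem]
      have h2 : 0 < C.N (C.dual l) X X := by rw [← hfrob]; exact h
      exact act_eq_of_pos ((⟨l, hconsdim l h⟩ : C.Inv)⁻¹).2 h2
    have hstabcard : Nat.card ↥stab = Hf.card := by
      have e3 : ↥stab ≃ {l : C.I // 0 < C.N X (C.dual X) l} :=
        { toFun := fun u => ⟨↑u.1, hfwd u.1 u.2⟩
          invFun := fun l => ⟨⟨l.1, hconsdim l.1 l.2⟩, hbwd l.1 l.2⟩
          left_inv := fun u => by
            apply Subtype.ext
            apply Subtype.ext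
            rfl
          right_inv := fun l => rfl }
      rw [Nat.card_congr e3, Nat.card_eq_fintype_card, Fintype.card_subtype]
    have hstab_le : stab ≤ Zsub S := by
      intro u hu
      exact hconsZ ↑u (hfwd u hu)
    have hdvd : Hf.card ∣ q := by
      rw [← hstabcard, ← hZsubcard]
      exact Subgroup.card_dvd_of_le hstab_le
    have hXgt : 1 < C.dim X := lt_of_le_of_ne (C.dim_ge_one X) (Ne.symm hX)
    have hH2 : 1 < Hf.card := by
      have : (1 : ℝ) < (Hf.card : ℝ) := by
        rw [← hcardH]
        nlinarith
      exact_mod_cast this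
    have hHq : Hf.card = q := by
      rcases hq.eq_one_or_self_of_dvd _ hdvd with h | h
      · omega
      · exact h
    constructor
    · rw [hcardH, hHq]
    · apply Finset.eq_of_subset_of_card_le
      · intro l hl
        rw [hHfdef, Finset.mem_filter] at hl
        simp only [hZfdef, Finset.mem_filter, Finset.mem_univ, true_and]
        exact hconsZ l hl.2
      · rw [hZfcard, hHq]
  -- adSet = Zset S
  obtain ⟨X0, hX0⟩ : ∃ X : C.I, C.dim X ≠ 1 := by
    by_contra h
    push_neg at h
    exact hnp h
  have hadZ : C.adSet = Zset S := by
    apply Set.Subset.antisymm (adSet_subset_Zset S)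
    intro i hi
    have hiZf : i ∈ Zf := by
      simp only [hZfdef, Finset.mem_filter, Finset.mem_univ, true_and]
      exact hi
    rw [← (hkey X0 hX0).2] at hiZf
    rw [Finset.mem_filter] at hiZf
    exact gen.base ⟨X0, hiZf.2⟩
  refine ⟨?_, ?_, ?_⟩
  · -- universal grading components
    intro G _ g hfaith had x
    obtain ⟨i0, hi0⟩ := hfaith x
    have htr := FPdimSet_translate g.deg (fun j k l h => g.deg_mul j k l h) i0 1
    rw [mul_one, hi0] at htr
    rw [← htr, had, hadZ, hFzq]
  · -- dimensions of non-invertibles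
    intro X hX
    have h := (hkey X hX).1
    have := congrArg Real.sqrt h
    rwa [Real.sqrt_sq (dim_pos X).le] at this
  · -- not integral
    intro hint
    obtain ⟨m', hm'⟩ := hint X0
    have h := (hkey X0 hX0).1
    rw [hm'] at h
    have hq' : (m' : ℝ) ^ 2 = (q : ℝ) := h
    have hqn : m' * m' = q := by
      have : ((m' * m' : ℕ) : ℝ) = (q : ℝ) := by push_cast; nlinarith
      exact_mod_cast this
    rcases hq.eq_one_or_self_of_dvd m' ⟨m', hqn.symm⟩ with h1 | h1
    · rw [h1] at hqn
      simp at hqn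
      exact hq.one_lt.ne' hqn.symm
    · rw [h1] at hqn
      have : q * q = q * 1 := by omega
      have hq1 : q = 1 := by
        have := Nat.eq_of_mul_eq_mul_left hq.pos this
        omega
      exact hq.one_lt.ne' hq1
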